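/- arXiv:2404.18197 — 2 statements merged into one kernel-verified Lean document; each statement's English description precedes it below -/
import Mathlib

section
/- If the unconfoundedness assumption t ⫫ (y(0), y(1)) | X holds together with positivity 0 < P(t = 1 | X = x) < 1 for all x, then the average treatment effect E[y(1) − y(0)] is identified from the observational distribution as E_X[ E[y | t=1, X] − E[y | t=0, X] ]. -/
attribute [local instance] Classical.propDecidable

/-- Probability of an event under a pmf `p` on a finite space. -/
noncomputable def prob {Ω : Type} [Fintype Ω] (p : Ω → ℝ) (E : Set Ω) : ℝ :=
  ∑ ω, if ω ∈ E then p ω else 0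

/-- Conditional probability `P(A | B)` under `p`. -/
noncomputable def condProb {Ω : Type} [Fintype Ω] (p : Ω → ℝ) (A B : Set Ω) : ℝ :=
  prob p (A ∩ B) / prob p B

/-- Conditional expectation `E[f | E]` under `p`. -/
noncomputable def condExp {Ω : Type} [Fintype Ω] (p : Ω → ℝ) (f : Ω → ℝ) (E : Set Ω) : ℝ :=
  (∑ ω, if ω ∈ E then p ω * f ω else 0) / prob p E

/-- if unconfoundedness `(y(0), y(1)) ⫫ t | X` holds together with
positivity `0 < P(t = 1 | X = x) < 1` for all `x`, then the average treatment effect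
`E[y(1) − y(0)]` is identified from the observational distribution as
`E_X[ E[y | t=1, X] − E[y | t=0, X] ]`. -/
theorem stmt_17 {Ω 𝒳 : Type} [Fintype Ω] [Fintype 𝒳]
    (p : Ω → ℝ) (hnonneg : ∀ ω, 0 ≤ p ω) (hsum : ∑ ω, p ω = 1)
    (t : Ω → Bool) (y0 y1 : Ω → ℝ) (X : Ω → 𝒳)
    -- observed outcome
    (y : Ω → ℝ) (hy : ∀ ω, y ω = if t ω then y1 ω else y0 ω)
    -- unconfoundedness: (y(0), y(1)) ⫫ t | X
    (hunconf : ∀ (a b : ℝ) (tv : Bool) (x : 𝒳),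
      prob p {ω | y0 ω = a ∧ y1 ω = b ∧ t ω = tv ∧ X ω = x} * prob p {ω | X ω = x}
        = prob p {ω | y0 ω = a ∧ y1 ω = b ∧ X ω = x} *
            prob p {ω | t ω = tv ∧ X ω = x})
    -- positivity: 0 < P(t = 1 | X = x) < 1 for all x
    (hposit : ∀ x : 𝒳, 0 < condProb p {ω | t ω = true} {ω | X ω = x} ∧
      condProb p {ω | t ω = true} {ω | X ω = x} < 1) :
    (∑ ω, p ω * (y1 ω - y0 ω))
      = ∑ x : 𝒳, prob p {ω | X ω = x} *
          (condExp p y {ω | t ω = true ∧ X ω = x} -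
            condExp p y {ω | t ω = false ∧ X ω = x}) := by
  classical
  have hprob_nonneg : ∀ E : Set Ω, 0 ≤ prob p E := by
    intro E
    apply Finset.sum_nonneg
    intro ω _
    split
    · exact hnonneg ω
    · exact le_refl 0
  -- key identity via unconfoundedness
  have key : ∀ (tv : Bool) (x : 𝒳),
      (∑ ω, if t ω = tv ∧ X ω = x then p ω * y ω else 0) * prob p {ω | X ω = x}
        = (∑ ω, if X ω = x then p ω * (if tv then y1 ω else y0 ω) else 0) *
            prob p {ω | t ω = tv ∧ X ω = x} := by
    intro tv x
    set A : Finset (ℝ × ℝ) := Finset.image (fun ω => (y0 ω, y1 ω)) Finset.univ with hA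
    have hmaps : ∀ ω ∈ (Finset.univ : Finset Ω), (y0 ω, y1 ω) ∈ A :=
      fun ω _ => Finset.mem_image_of_mem _ (Finset.mem_univ ω)
    have L_eq : (∑ ω, if t ω = tv ∧ X ω = x then p ω * y ω else 0)
        = ∑ ab ∈ A, (if tv then ab.2 else ab.1) *
            prob p {ω | y0 ω = ab.1 ∧ y1 ω = ab.2 ∧ t ω = tv ∧ X ω = x} := by
      rw [← Finset.sum_fiberwise_of_maps_to hmaps
        (fun ω => if t ω = tv ∧ X ω = x then p ω * y ω else 0)]
      refine Finset.sum_congr rfl fun ab _ => ?_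
      rw [Finset.sum_filter]
      unfold prob
      rw [Finset.mul_sum]
      refine Finset.sum_congr rfl fun ω _ => ?_
      by_cases h1 : (y0 ω, y1 ω) = ab
      · by_cases h2 : t ω = tv ∧ X ω = x
        · obtain ⟨h2a, h2b⟩ := h2
          have ha : y0 ω = ab.1 := by rw [← h1]
          have hb : y1 ω = ab.2 := by rw [← h1]
          have hmem : ω ∈ {ω | y0 ω = ab.1 ∧ y1 ω = ab.2 ∧ t ω = tv ∧ X ω = x} :=
            ⟨ha, hb, h2a, h2b⟩
          rw [if_pos h1, if_pos ⟨h2a, h2b⟩, if_pos hmem]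
          have hyω : y ω = if tv then ab.2 else ab.1 := by
            rw [hy ω, h2a, ← ha, ← hb]
          rw [hyω]; ring
        · have hmem : ω ∉ {ω | y0 ω = ab.1 ∧ y1 ω = ab.2 ∧ t ω = tv ∧ X ω = x} :=
            fun h => h2 ⟨h.2.2.1, h.2.2.2⟩
          rw [if_pos h1, if_neg h2, if_neg hmem, mul_zero]
      · have hmem : ω ∉ {ω | y0 ω = ab.1 ∧ y1 ω = ab.2 ∧ t ω = tv ∧ X ω = x} := by
          intro h
          exact h1 (Prod.ext h.1 h.2.1)
        rw [if_neg h1, if_neg hmem, mul_zero]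
    have M_eq : (∑ ω, if X ω = x then p ω * (if tv then y1 ω else y0 ω) else 0)
        = ∑ ab ∈ A, (if tv then ab.2 else ab.1) *
            prob p {ω | y0 ω = ab.1 ∧ y1 ω = ab.2 ∧ X ω = x} := by
      rw [← Finset.sum_fiberwise_of_maps_to hmaps
        (fun ω => if X ω = x then p ω * (if tv then y1 ω else y0 ω) else 0)]
      refine Finset.sum_congr rfl fun ab _ => ?_
      rw [Finset.sum_filter]
      unfold prob
      rw [Finset.mul_sum]
      refine Finset.sum_congr rfl fun ω _ => ?_
      by_cases h1 : (y0 ω, y1 ω) = ab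
      · by_cases h2 : X ω = x
        · have ha : y0 ω = ab.1 := by rw [← h1]
          have hb : y1 ω = ab.2 := by rw [← h1]
          have hmem : ω ∈ {ω | y0 ω = ab.1 ∧ y1 ω = ab.2 ∧ X ω = x} := ⟨ha, hb, h2⟩
          rw [if_pos h1, if_pos h2, if_pos hmem]
          cases tv <;> simp [ha, hb] <;> ring
        · have hmem : ω ∉ {ω | y0 ω = ab.1 ∧ y1 ω = ab.2 ∧ X ω = x} :=
            fun h => h2 h.2.2
          rw [if_pos h1, if_neg h2, if_neg hmem, mul_zero]
      · have hmem : ω ∉ {ω | y0 ω = ab.1 ∧ y1 ω = ab.2 ∧ X ω = x} := by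
          intro h
          exact h1 (Prod.ext h.1 h.2.1)
        rw [if_neg h1, if_neg hmem, mul_zero]
    rw [L_eq, M_eq, Finset.sum_mul, Finset.sum_mul]
    refine Finset.sum_congr rfl fun ab _ => ?_
    rw [mul_assoc, mul_assoc, hunconf ab.1 ab.2 tv x]
  -- positivity consequences
  have hpos : ∀ x : 𝒳, 0 < prob p {ω | t ω = true ∧ X ω = x} ∧
      0 < prob p {ω | t ω = false ∧ X ω = x} := by
    intro x
    obtain ⟨h0, h1⟩ := hposit x
    have hinter : ({ω | t ω = true} ∩ {ω | X ω = x} : Set Ω)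
        = {ω | t ω = true ∧ X ω = x} := rfl
    unfold condProb at h0 h1
    rw [hinter] at h0 h1
    have hDpos : 0 < prob p {ω | X ω = x} := by
      rcases lt_or_eq_of_le (hprob_nonneg {ω | X ω = x}) with h | h
      · exact h
      · rw [← h, div_zero] at h0; exact absurd h0 (lt_irrefl 0)
    have hNpos : 0 < prob p {ω | t ω = true ∧ X ω = x} := by
      have := mul_pos h0 hDpos
      rwa [div_mul_cancel₀ _ (ne_of_gt hDpos)] at this
    refine ⟨hNpos, ?_⟩
    have hsplit : prob p {ω | t ω = true ∧ X ω = x}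
        + prob p {ω | t ω = false ∧ X ω = x} = prob p {ω | X ω = x} := by
      unfold prob
      rw [← Finset.sum_add_distrib]
      refine Finset.sum_congr rfl fun ω _ => ?_
      by_cases h2 : X ω = x
      · cases ht : t ω <;> simp [h2, ht]
      · simp [h2]
    have hlt : prob p {ω | t ω = true ∧ X ω = x} < prob p {ω | X ω = x} := by
      have := (div_lt_one hDpos).mp h1
      exact this
    linarith
  -- conditional expectation identity
  have condExp_eq : ∀ (tv : Bool) (x : 𝒳),
      prob p {ω | X ω = x} * condExp p y {ω | t ω = tv ∧ X ω = x}
        = ∑ ω, if X ω = x then p ω * (if tv then y1 ω else y0 ω) else 0 := by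
    intro tv x
    have hD : 0 < prob p {ω | t ω = tv ∧ X ω = x} := by
      cases tv
      · exact (hpos x).2
      · exact (hpos x).1
    simp only [condExp, Set.mem_setOf_eq]
    rw [mul_div_assoc', div_eq_iff (ne_of_gt hD), mul_comm (prob p {ω | X ω = x})]
    convert key tv x using 2
  -- final assembly
  have hx : ∀ x : 𝒳, prob p {ω | X ω = x} *
      (condExp p y {ω | t ω = true ∧ X ω = x} -
        condExp p y {ω | t ω = false ∧ X ω = x})
      = ∑ ω, if X ω = x then p ω * (y1 ω - y0 ω) else 0 := by
    intro x
    rw [mul_sub, condExp_eq true x, condExp_eq false x, ← Finset.sum_sub_distrib]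
    refine Finset.sum_congr rfl fun ω _ => ?_
    by_cases h2 : X ω = x <;> simp [h2] <;> ring
  calc (∑ ω, p ω * (y1 ω - y0 ω))
      = ∑ ω, ∑ x : 𝒳, (if X ω = x then p ω * (y1 ω - y0 ω) else 0) := by
        refine Finset.sum_congr rfl fun ω _ => ?_
        rw [Finset.sum_ite_eq]
        simp
    _ = ∑ x : 𝒳, ∑ ω, (if X ω = x then p ω * (y1 ω - y0 ω) else 0) := Finset.sum_comm
    _ = ∑ x : 𝒳, prob p {ω | X ω = x} *
          (condExp p y {ω | t ω = true ∧ X ω = x} -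
            condExp p y {ω | t ω = false ∧ X ω = x}) := by
        refine Finset.sum_congr rfl fun x _ => ?_
        rw [hx x]
end

section
/- Under unconfoundedness and positivity, the inverse-propensity-weighted estimand recovers the ATE: E[ t·y / e(X) − (1−t)·y / (1−e(X)) ] = E[y(1) − y(0)], where e(X) = P(t = 1 | X). -/
attribute [local instance] Classical.propDecidable

/-- under unconfoundedness and positivity, the inverse-propensity-weighted
estimand recovers the ATE:
`E[ t·y / e(X) − (1−t)·y / (1−e(X)) ] = E[y(1) − y(0)]`, with `e(X) = P(t = 1 | X)`. -/
theorem stmt_18 {Ω 𝒳 : Type} [Fintype Ω] [Fintype 𝒳]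
    (p : Ω → ℝ) (hnonneg : ∀ ω, 0 ≤ p ω) (hsum : ∑ ω, p ω = 1)
    (t : Ω → Bool) (y0 y1 : Ω → ℝ) (X : Ω → 𝒳)
    -- observed outcome
    (y : Ω → ℝ) (hy : ∀ ω, y ω = if t ω then y1 ω else y0 ω)
    -- the propensity score e(x) = P(t = 1 | X = x)
    (e : 𝒳 → ℝ) (he : ∀ x, e x = condProb p {ω | t ω = true} {ω | X ω = x})
    -- unconfoundedness: (y(0), y(1)) ⫫ t | X
    (hunconf : ∀ (a b : ℝ) (tv : Bool) (x : 𝒳),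
      prob p {ω | y0 ω = a ∧ y1 ω = b ∧ t ω = tv ∧ X ω = x} * prob p {ω | X ω = x}
        = prob p {ω | y0 ω = a ∧ y1 ω = b ∧ X ω = x} *
            prob p {ω | t ω = tv ∧ X ω = x})
    -- positivity: 0 < e(x) < 1 for all x
    (hposit : ∀ x : 𝒳, 0 < e x ∧ e x < 1) :
    (∑ ω, p ω * ((if t ω then y ω / e (X ω) else 0) -
        (if t ω then 0 else y ω / (1 - e (X ω)))))
      = ∑ ω, p ω * (y1 ω - y0 ω) := by
  classical
  -- nonnegativity of probabilities
  have hprobnn : ∀ E : Set Ω, 0 ≤ prob p E := by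
    intro E
    apply Finset.sum_nonneg
    intro ω _
    split
    · exact hnonneg ω
    · exact le_refl 0
  have hPpos : ∀ x, 0 < prob p {ω | X ω = x} := by
    intro x
    rcases (hprobnn {ω | X ω = x}).lt_or_eq with h | h
    · exact h
    · exfalso
      have h1 := (hposit x).1
      rw [he x] at h1
      unfold condProb at h1
      rw [← h, div_zero] at h1
      exact lt_irrefl 0 h1
  have hPx_ne : ∀ x, prob p {ω | X ω = x} ≠ 0 := fun x => (hPpos x).ne'
  have hinter : ∀ x, prob p ({ω | t ω = true} ∩ {ω | X ω = x})
      = prob p {ω | t ω = true ∧ X ω = x} := fun x => rfl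
  have hTrue : ∀ x, prob p {ω | t ω = true ∧ X ω = x}
      = e x * prob p {ω | X ω = x} := by
    intro x
    rw [← hinter, he x]
    unfold condProb
    exact (div_mul_cancel₀ _ (hPx_ne x)).symm
  have hsplit : ∀ x, prob p {ω | X ω = x}
      = prob p {ω | t ω = true ∧ X ω = x} + prob p {ω | t ω = false ∧ X ω = x} := by
    intro x
    unfold prob
    rw [← Finset.sum_add_distrib]
    apply Finset.sum_congr rfl
    intro ω _
    by_cases hX : X ω = x <;> cases ht : t ω <;> simp [hX, ht]
  have hFalse : ∀ x, prob p {ω | t ω = false ∧ X ω = x}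
      = (1 - e x) * prob p {ω | X ω = x} := by
    intro x
    have h := hsplit x
    rw [hTrue x] at h
    linarith
  -- key lemma
  have key : ∀ (x : 𝒳) (tv : Bool) (w : ℝ → ℝ → ℝ),
      (∑ ω, if t ω = tv ∧ X ω = x then p ω * w (y0 ω) (y1 ω) else 0)
        = (prob p {ω | t ω = tv ∧ X ω = x} / prob p {ω | X ω = x}) *
            ∑ ω, if X ω = x then p ω * w (y0 ω) (y1 ω) else 0 := by
    intro x tv w
    set V := Finset.image (fun ω => (y0 ω, y1 ω)) (Finset.univ : Finset Ω) with hV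
    have grp : ∀ f : Ω → ℝ, (∑ ω, f ω)
        = ∑ v ∈ V, ∑ ω ∈ Finset.univ.filter (fun ω => (y0 ω, y1 ω) = v), f ω := by
      intro f
      rw [Finset.sum_fiberwise_of_maps_to]
      intro ω _
      exact Finset.mem_image_of_mem _ (Finset.mem_univ ω)
    have inner : ∀ (a b : ℝ) (Q : Ω → Prop) (inst : DecidablePred Q),
        (∑ ω ∈ Finset.univ.filter (fun ω => (y0 ω, y1 ω) = (a, b)),
            @ite ℝ (Q ω) (inst ω) (p ω * w (y0 ω) (y1 ω)) 0)
          = w a b * prob p {ω | y0 ω = a ∧ y1 ω = b ∧ Q ω} := by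
      intro a b Q inst
      rw [Finset.sum_filter]
      unfold prob
      rw [Finset.mul_sum]
      apply Finset.sum_congr rfl
      intro ω _
      by_cases h1 : y0 ω = a
      · by_cases h2 : y1 ω = b
        · by_cases h3 : Q ω
          · simp only [h1, h2, h3, Prod.mk.injEq, and_self, if_true, Set.mem_setOf_eq,
              and_true, true_and]
            ring
          · simp [h1, h2, h3, Prod.ext_iff]
        · simp [h2, Prod.ext_iff]
      · simp [h1, Prod.ext_iff]
    calc (∑ ω, if t ω = tv ∧ X ω = x then p ω * w (y0 ω) (y1 ω) else 0)
        = ∑ v ∈ V, ∑ ω ∈ Finset.univ.filter (fun ω => (y0 ω, y1 ω) = v),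
            (if t ω = tv ∧ X ω = x then p ω * w (y0 ω) (y1 ω) else 0) := grp _
      _ = ∑ v ∈ V, w v.1 v.2 *
            prob p {ω | y0 ω = v.1 ∧ y1 ω = v.2 ∧ t ω = tv ∧ X ω = x} := by
            apply Finset.sum_congr rfl
            rintro ⟨a, b⟩ _
            exact inner a b _ _
      _ = ∑ v ∈ V, (prob p {ω | t ω = tv ∧ X ω = x} / prob p {ω | X ω = x}) *
            (w v.1 v.2 * prob p {ω | y0 ω = v.1 ∧ y1 ω = v.2 ∧ X ω = x}) := by
            apply Finset.sum_congr rfl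
            rintro ⟨a, b⟩ _
            have h := hunconf a b tv x
            have hx := hPx_ne x
            have hA : prob p {ω | y0 ω = a ∧ y1 ω = b ∧ t ω = tv ∧ X ω = x}
                = prob p {ω | y0 ω = a ∧ y1 ω = b ∧ X ω = x} *
                  (prob p {ω | t ω = tv ∧ X ω = x} / prob p {ω | X ω = x}) := by
              field_simp
              linarith
            rw [hA]
            ring
      _ = (prob p {ω | t ω = tv ∧ X ω = x} / prob p {ω | X ω = x}) *
            ∑ v ∈ V, w v.1 v.2 * prob p {ω | y0 ω = v.1 ∧ y1 ω = v.2 ∧ X ω = x} := by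
            rw [Finset.mul_sum]
      _ = (prob p {ω | t ω = tv ∧ X ω = x} / prob p {ω | X ω = x}) *
            ∑ ω, if X ω = x then p ω * w (y0 ω) (y1 ω) else 0 := by
            congr 1
            rw [grp (fun ω => if X ω = x then p ω * w (y0 ω) (y1 ω) else 0)]
            apply Finset.sum_congr rfl
            rintro ⟨a, b⟩ _
            exact (inner a b _ _).symm
  -- grouping over x
  have grpX : ∀ f : Ω → ℝ, (∑ ω, f ω)
      = ∑ x : 𝒳, ∑ ω ∈ Finset.univ.filter (fun ω => X ω = x), f ω := by
    intro f
    exact (Finset.sum_fiberwise_of_maps_to (fun ω _ => Finset.mem_univ (X ω)) f).symm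
  -- treated term
  have h1 : (∑ ω, p ω * (if t ω then y ω / e (X ω) else 0)) = ∑ ω, p ω * y1 ω := by
    rw [grpX (fun ω => p ω * (if t ω then y ω / e (X ω) else 0)),
        grpX (fun ω => p ω * y1 ω)]
    apply Finset.sum_congr rfl
    intro x _
    have hex := (hposit x).1.ne'
    have step1 : (∑ ω ∈ Finset.univ.filter (fun ω => X ω = x),
          p ω * (if t ω then y ω / e (X ω) else 0))
        = (e x)⁻¹ * ∑ ω, (if t ω = true ∧ X ω = x then p ω * y1 ω else 0) := by
      rw [Finset.sum_filter, Finset.mul_sum]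
      apply Finset.sum_congr rfl
      intro ω _
      by_cases hX : X ω = x
      · cases ht : t ω
        · simp [hX, ht]
        · simp only [hX, ht, if_true, true_and, hy ω]
          ring
      · simp [hX]
    have kx := key x true (fun a b => b)
    rw [step1, kx, hTrue x, mul_div_assoc, div_self (hPx_ne x), mul_one,
        ← mul_assoc, inv_mul_cancel₀ hex, one_mul, Finset.sum_filter]
  -- control term
  have h0 : (∑ ω, p ω * (if t ω then 0 else y ω / (1 - e (X ω)))) = ∑ ω, p ω * y0 ω := by
    rw [grpX (fun ω => p ω * (if t ω then 0 else y ω / (1 - e (X ω)))),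
        grpX (fun ω => p ω * y0 ω)]
    apply Finset.sum_congr rfl
    intro x _
    have hex : (1 - e x) ≠ 0 := by
      have := (hposit x).2
      intro h
      linarith
    have step1 : (∑ ω ∈ Finset.univ.filter (fun ω => X ω = x),
          p ω * (if t ω then 0 else y ω / (1 - e (X ω))))
        = (1 - e x)⁻¹ * ∑ ω, (if t ω = false ∧ X ω = x then p ω * y0 ω else 0) := by
      rw [Finset.sum_filter, Finset.mul_sum]
      apply Finset.sum_congr rfl
      intro ω _
      by_cases hX : X ω = x
      · cases ht : t ω
        · simp only [hX, ht, if_true, true_and, hy ω]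
          simp only [Bool.false_eq_true, if_false]
          ring
        · simp [hX, ht]
      · simp [hX]
    have kx := key x false (fun a b => a)
    rw [step1, kx, hFalse x, mul_div_assoc, div_self (hPx_ne x), mul_one,
        ← mul_assoc, inv_mul_cancel₀ hex, one_mul, Finset.sum_filter]
  calc (∑ ω, p ω * ((if t ω then y ω / e (X ω) else 0) -
          (if t ω then 0 else y ω / (1 - e (X ω)))))
      = (∑ ω, p ω * (if t ω then y ω / e (X ω) else 0)) -
          ∑ ω, p ω * (if t ω then 0 else y ω / (1 - e (X ω))) := by
        rw [← Finset.sum_sub_distrib]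
        apply Finset.sum_congr rfl
        intro ω _
        ring
    _ = (∑ ω, p ω * y1 ω) - ∑ ω, p ω * y0 ω := by rw [h1, h0]
    _ = ∑ ω, p ω * (y1 ω - y0 ω) := by
        rw [← Finset.sum_sub_distrib]
        apply Finset.sum_congr rfl
        intro ω _
        ring
end
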